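/- arXiv:math/0505630 — 4 statements merged into one kernel-verified Lean document; each statement's English description precedes it below -/
import Mathlib

section
/- A Weyr matrix of a single eigenvalue $\lambda$ is obtained from the corresponding Jordan matrix $J(\lambda) = \bigoplus_{j} J_j(\lambda)^{e_j}$ by conjugation by a permutation matrix, i.e. there is a permutation matrix $P$ with $W_\lambda = P^{-1} J(\lambda) P$. -/
open Finset

open scoped Classical in
/-- `W` is a Weyr matrix with single eigenvalue `lam`, with `d` diagonal blocks of
sizes `m 0 ≥ m 1 ≥ ⋯ ≥ m (d-1) > 0`: the diagonal blocks are `lam • I`, and the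
superdiagonal block from block `j` to block `j+1` is `(I_{m (j+1)}; 0)`. -/
def IsSingleWeyrData {k : Type*} [Field k] {n : ℕ} (lam : k) (d : ℕ) (m : ℕ → ℕ)
    (W : Matrix (Fin n) (Fin n) k) : Prop :=
  (∀ j < d, 0 < m j) ∧
  (∀ i j, i ≤ j → j < d → m j ≤ m i) ∧
  (∑ i ∈ Finset.range d, m i = n) ∧
  (∀ r c : Fin n, W r c =
    if (r : ℕ) = (c : ℕ) then lam
    else if ∃ j, j + 1 < d ∧ ∃ p, p < m (j + 1) ∧
        (r : ℕ) = (∑ i ∈ Finset.range j, m i) + p ∧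
        (c : ℕ) = (∑ i ∈ Finset.range (j + 1), m i) + p
      then 1 else 0)

/-- The `d × d` upper triangular Jordan block with eigenvalue `lam`. -/
def jordanBlock {k : Type*} [Zero k] [One k] (d : ℕ) (lam : k) :
    Matrix (Fin d) (Fin d) k :=
  Matrix.of fun i j => if (i : ℕ) = (j : ℕ) then lam
    else if (i : ℕ) + 1 = (j : ℕ) then 1 else 0

section Aux

variable (d : ℕ) (e : ℕ → ℕ)

/-- tail sums -/
def mW (j : ℕ) : ℕ := ∑ i ∈ Finset.Ico j d, e i

/-- partial sums of tail sums -/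
def SW (j : ℕ) : ℕ := ∑ i ∈ Finset.range j, mW d e i

lemma mW_anti {j j' : ℕ} (h : j ≤ j') : mW d e j' ≤ mW d e j :=
  Finset.sum_le_sum_of_subset (Finset.Ico_subset_Ico h le_rfl)

lemma mW_succ {i : ℕ} (hi : i < d) : mW d e i = e i + mW d e (i + 1) := by
  unfold mW
  rw [Finset.sum_eq_sum_Ico_succ_bot (by omega : i < d)]

lemma SW_succ (j : ℕ) : SW d e (j + 1) = SW d e j + mW d e j :=
  Finset.sum_range_succ _ _

lemma SW_mono : Monotone (SW d e) :=
  monotone_nat_of_le_succ fun j => by rw [SW_succ]; omega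

lemma block_unique (hpos : ∀ j < d, 0 < mW d e j)
    {a b t s : ℕ} (ha : a < d) (hb : b < d)
    (ht : t < mW d e a) (hs : s < mW d e b)
    (h : SW d e a + t = SW d e b + s) : a = b ∧ t = s := by
  have key : ∀ a b t s : ℕ, a < b → b ≤ d → t < mW d e a →
      SW d e a + t ≠ SW d e b + s := by
    intro a b t s hab hbd ht
    have h1 : SW d e (a + 1) ≤ SW d e b := SW_mono d e hab
    rw [SW_succ] at h1
    omega
  rcases lt_trichotomy a b with h' | h' | h'
  · exact absurd h (key a b t s h' (by omega) ht)
  · subst h'; omega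
  · exact absurd h.symm (key b a s t h' (by omega) hs)

lemma tail_unique {i i' q q' : ℕ} (hi : i < d) (hi' : i' < d)
    (hq : q < e i) (hq' : q' < e i')
    (h : mW d e (i + 1) + q = mW d e (i' + 1) + q') : i = i' ∧ q = q' := by
  have key : ∀ i i' q q' : ℕ, i < i' → i' < d → q' < e i' →
      mW d e (i + 1) + q ≠ mW d e (i' + 1) + q' := by
    intro i i' q q' hii hi'd hq'
    have h1 : mW d e i' ≤ mW d e (i + 1) := mW_anti d e hii
    have h2 := mW_succ d e hi'd
    omega
  rcases lt_trichotomy i i' with h' | h' | h'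
  · exact absurd h (key i i' q q' h' hi' hq')
  · subst h'; omega
  · exact absurd h.symm (key i' i q' q h' hi hq)

lemma sum_swap_aux : ∑ j ∈ Finset.range d, mW d e j
    = ∑ j ∈ Finset.range d, (j + 1) * e j := by
  induction d with
  | zero => simp
  | succ d ih =>
    have h1 : ∀ j ∈ Finset.range (d + 1), mW (d + 1) e j = mW d e j + e d := by
      intro j hj
      simp only [Finset.mem_range] at hj
      unfold mW
      rw [Finset.sum_Ico_succ_top (by omega : j ≤ d)]
    rw [Finset.sum_congr rfl h1, Finset.sum_add_distrib, Finset.sum_range_succ,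
      Finset.sum_range_succ]
    have h2 : mW d e d = 0 := by unfold mW; simp
    rw [h2, ih, Finset.sum_range_succ, Finset.sum_const, Finset.card_range,
      smul_eq_mul]
    ring

end Aux

/-- **Lemma 2.5.1.** A Weyr matrix of a single eigenvalue `lam`, with block sizes
`m j = e j + e (j+1) + ⋯ + e (d-1)` (where `e j` is the number of Jordan blocks of
size `j+1`), is obtained from the Jordan matrix `J(lam) = ⊕_j J_{j+1}(lam)^{e j}`
by simultaneously permuting rows and columns, i.e. by conjugation with a
permutation matrix (here: a bijection of the index sets). -/

theorem stmt2 {k : Type*} [Field k] (lam : k) (d : ℕ) (e : ℕ → ℕ) (n : ℕ)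
    (hn : n = ∑ j ∈ Finset.range d, (j + 1) * e j)
    (W : Matrix (Fin n) (Fin n) k)
    (hW : IsSingleWeyrData lam d (fun j => ∑ i ∈ Finset.Ico j d, e i) W) :
    ∃ σ : Fin n ≃ ((p : (j : Fin d) × Fin (e (j : ℕ))) × Fin ((p.1 : ℕ) + 1)),
      ∀ r c : Fin n,
        W r c = Matrix.blockDiagonal'
          (fun p : (j : Fin d) × Fin (e (j : ℕ)) => jordanBlock ((p.1 : ℕ) + 1) lam)
          (σ r) (σ c) := by
  classical
  obtain ⟨hpos₀, -, hsum₀, hent₀⟩ := hW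
  have hpos : ∀ j < d, 0 < mW d e j := hpos₀
  have hSd : SW d e d = n := hsum₀
  have hent : ∀ r c : Fin n, W r c =
      if (r : ℕ) = (c : ℕ) then lam
      else if ∃ j, j + 1 < d ∧ ∃ p, p < mW d e (j + 1) ∧
          (r : ℕ) = SW d e j + p ∧ (c : ℕ) = SW d e (j + 1) + p
        then 1 else 0 := hent₀
  have hlt : ∀ x : ((p : (j : Fin d) × Fin (e (j : ℕ))) × Fin ((p.1 : ℕ) + 1)),
      SW d e (x.2 : ℕ) + mW d e ((x.1.1 : ℕ) + 1) + (x.1.2 : ℕ) < n := by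
    rintro ⟨⟨i, q⟩, a⟩
    show SW d e (a : ℕ) + mW d e ((i : ℕ) + 1) + (q : ℕ) < n
    have ha : (a : ℕ) < (i : ℕ) + 1 := a.isLt
    have hq : (q : ℕ) < e (i : ℕ) := q.isLt
    have hid : (i : ℕ) < d := i.isLt
    have h1 : mW d e (i : ℕ) = e (i : ℕ) + mW d e ((i : ℕ) + 1) := mW_succ d e hid
    have h2 : mW d e (i : ℕ) ≤ mW d e (a : ℕ) := mW_anti d e (by omega)
    have h3 : SW d e ((a : ℕ) + 1) ≤ SW d e d := SW_mono d e (by omega)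
    have h4 := SW_succ d e (a : ℕ)
    have h5 : mW d e (a : ℕ) ≤ mW d e (a : ℕ) := le_rfl
    omega
  let g : ((p : (j : Fin d) × Fin (e (j : ℕ))) × Fin ((p.1 : ℕ) + 1)) → Fin n := fun x =>
    ⟨SW d e (x.2 : ℕ) + mW d e ((x.1.1 : ℕ) + 1) + (x.1.2 : ℕ), hlt x⟩
  have hg : ∀ (i : Fin d) (q : Fin (e (i : ℕ))) (a : Fin ((i : ℕ) + 1)),
      ((g ⟨⟨i, q⟩, a⟩ : Fin n) : ℕ)
      = SW d e (a : ℕ) + mW d e ((i : ℕ) + 1) + (q : ℕ) := fun _ _ _ => rfl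
  -- bounds used repeatedly
  have hbd : ∀ (i : Fin d) (q : Fin (e (i : ℕ))) (a : Fin ((i : ℕ) + 1)),
      (a : ℕ) < d ∧ mW d e ((i : ℕ) + 1) + (q : ℕ) < mW d e (a : ℕ) := by
    intro i q a
    have ha : (a : ℕ) < (i : ℕ) + 1 := a.isLt
    have hq : (q : ℕ) < e (i : ℕ) := q.isLt
    have hid : (i : ℕ) < d := i.isLt
    have h1 : mW d e (i : ℕ) = e (i : ℕ) + mW d e ((i : ℕ) + 1) := mW_succ d e hid
    have h2 : mW d e (i : ℕ) ≤ mW d e (a : ℕ) := mW_anti d e (by omega)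
    exact ⟨by omega, by omega⟩
  have ginj : Function.Injective g := by
    rintro ⟨⟨i, q⟩, a⟩ ⟨⟨i', q'⟩, b⟩ h
    have h' : SW d e (a : ℕ) + (mW d e ((i : ℕ) + 1) + (q : ℕ))
        = SW d e (b : ℕ) + (mW d e ((i' : ℕ) + 1) + (q' : ℕ)) := by
      have := congrArg (fun z : Fin n => (z : ℕ)) h
      simp only [hg] at this
      omega
    obtain ⟨had, hta⟩ := hbd i q a
    obtain ⟨hbd', htb⟩ := hbd i' q' b
    obtain ⟨hab, hts⟩ := block_unique d e hpos had hbd' hta htb h'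
    obtain ⟨hii, hqq⟩ := tail_unique d e i.isLt i'.isLt q.isLt q'.isLt hts
    have hi : i = i' := Fin.ext hii
    subst hi
    have hq : q = q' := Fin.ext hqq
    subst hq
    have hab' : a = b := Fin.ext hab
    subst hab'
    rfl
  have hcard : Fintype.card ((p : (j : Fin d) × Fin (e (j : ℕ))) × Fin ((p.1 : ℕ) + 1)) = n := by
    rw [hn]
    rw [Fintype.card_sigma]
    simp only [Fintype.card_fin]
    rw [← Finset.univ_sigma_univ, Finset.sum_sigma]
    simp only [Finset.sum_const, Finset.card_univ, Fintype.card_fin, smul_eq_mul]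
    rw [Fin.sum_univ_eq_sum_range (fun j => e j * (j + 1))]
    exact Finset.sum_congr rfl fun j _ => mul_comm _ _
  have gbij : Function.Bijective g :=
    (Fintype.bijective_iff_injective_and_card g).2 ⟨ginj, by simp [hcard]⟩
  let eqv := Equiv.ofBijective g gbij
  have key : ∀ x y : ((p : (j : Fin d) × Fin (e (j : ℕ))) × Fin ((p.1 : ℕ) + 1)),
      W (g x) (g y) =
      Matrix.blockDiagonal'
        (fun p : (j : Fin d) × Fin (e (j : ℕ)) => jordanBlock ((p.1 : ℕ) + 1) lam)
        x y := by
    rintro ⟨⟨i, q⟩, a⟩ ⟨⟨i', q'⟩, b⟩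
    rw [hent]
    obtain ⟨had, hta⟩ := hbd i q a
    obtain ⟨hbd', htb⟩ := hbd i' q' b
    by_cases hfst : (⟨i, q⟩ : (j : Fin d) × Fin (e (j : ℕ))) = ⟨i', q'⟩
    · obtain ⟨hii, hqq⟩ := Sigma.mk.inj_iff.mp hfst
      subst hii
      have hqq' : q = q' := eq_of_heq hqq
      subst hqq'
      rw [Matrix.blockDiagonal'_apply_eq]
      simp only [jordanBlock, Matrix.of_apply]
      rw [hg, hg]
      refine if_congr ⟨fun h => ?_, fun h => ?_⟩ rfl (if_congr ⟨fun h => ?_, fun h => ?_⟩ rfl rfl)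
      · -- C1 → ↑a = ↑b
        exact (block_unique d e hpos had hbd' hta htb (by omega)).1
      · -- ↑a = ↑b → C1
        rw [h]
      · -- C2 → ↑a + 1 = ↑b
        obtain ⟨j, hj, p, hp, hr, hc⟩ := h
        have hjd : j < d := by omega
        have hmono : mW d e (j + 1) ≤ mW d e j := mW_anti d e (by omega)
        have h5 := SW_succ d e j
        have h1 := block_unique d e hpos had hjd hta (by omega : p < mW d e j) (by omega)
        have h2 := block_unique d e hpos hbd' (by omega : j + 1 < d) htb hp (by omega)
        omega
      · -- ↑a + 1 = ↑b → C2
        refine ⟨(a : ℕ), by omega, mW d e ((i : ℕ) + 1) + (q : ℕ), ?_, by omega, ?_⟩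
        · have h3 : mW d e ((a : ℕ) + 1) = mW d e (b : ℕ) := by rw [h]
          omega
        · have h4 : SW d e (b : ℕ) = SW d e ((a : ℕ) + 1) := by rw [h]
          have h5 := SW_succ d e (a : ℕ)
          omega
    · rw [Matrix.blockDiagonal'_apply_ne _ _ _ hfst]
      have hfst' : ¬ ((i : ℕ) = (i' : ℕ) ∧ (q : ℕ) = (q' : ℕ)) := by
        rintro ⟨h1, h2⟩
        apply hfst
        have hi : i = i' := Fin.ext h1
        subst hi
        have hq : q = q' := Fin.ext h2
        subst hq
        rfl
      rw [if_neg, if_neg]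
      · rintro ⟨j, hj, p, hp, hr, hc⟩
        rw [hg] at hr hc
        have hjd : j < d := by omega
        have hmono : mW d e (j + 1) ≤ mW d e j := mW_anti d e (by omega)
        have h5 := SW_succ d e j
        have h1 := block_unique d e hpos had hjd hta (by omega : p < mW d e j) (by omega)
        have h2 := block_unique d e hpos hbd' (by omega : j + 1 < d) htb hp (by omega)
        have h3 := tail_unique d e i.isLt i'.isLt q.isLt q'.isLt (by omega)
        exact hfst' h3
      · intro hcon
        rw [hg, hg] at hcon
        have h1 := block_unique d e hpos had hbd' hta htb (by omega)
        have h3 := tail_unique d e i.isLt i'.isLt q.isLt q'.isLt (by omega)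
        exact hfst' h3
  refine ⟨eqv.symm, fun r c => ?_⟩
  have hr : g (eqv.symm r) = r := eqv.apply_symm_apply r
  have hc : g (eqv.symm c) = c := eqv.apply_symm_apply c
  have := key (eqv.symm r) (eqv.symm c)
  rwa [hr, hc] at this
end

section
/- Let $W$ be a Weyr matrix of a single eigenvalue $\lambda$ with diagonal block sizes $m_1 \geq m_2 \geq \cdots \geq m_d$. Then any matrix $X$ commuting with $W$ is block upper triangular with respect to the partition $(m_1, \dots, m_d)$: writing $X = (X_{ij})_{d \times d}$ with $X_{ij}$ of size $m_i \times m_j$, one has $X_{ij} = 0$ for $i > j$. -/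
open Finset


namespace Stmt7Aux

/-- Partial sums of block sizes. -/
def wS (m : ℕ → ℕ) (t : ℕ) : ℕ := ∑ i ∈ Finset.range t, m i

/-- Position `(r,c)` carries a `1` in the nilpotent part of the Weyr matrix. -/
def wP (d : ℕ) (m : ℕ → ℕ) (r c : ℕ) : Prop :=
  ∃ j, j + 1 < d ∧ ∃ p, p < m (j + 1) ∧ r = wS m j + p ∧ c = wS m (j + 1) + p

variable {d : ℕ} {m : ℕ → ℕ}

lemma wS_mono {a b : ℕ} (h : a ≤ b) : wS m a ≤ wS m b :=
  Finset.sum_le_sum_of_subset (Finset.range_subset_range.2 h)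

lemma wS_succ (a : ℕ) : wS m (a + 1) = wS m a + m a := Finset.sum_range_succ m a

lemma uniq {a b p q : ℕ} (hp : p < m a) (hq : q < m b) (h : wS m a + p = wS m b + q) :
    a = b ∧ p = q := by
  rcases lt_trichotomy a b with hab | hab | hab
  · exfalso
    have h1 : wS m (a + 1) = wS m a + m a := wS_succ a
    have h2 : wS m (a + 1) ≤ wS m b := wS_mono hab
    omega
  · subst hab; omega
  · exfalso
    have h1 : wS m (b + 1) = wS m b + m b := wS_succ b
    have h2 : wS m (b + 1) ≤ wS m a := wS_mono hab
    omega

lemma wP_lt (hm : ∀ j < d, 0 < m j) {r c : ℕ} (h : wP d m r c) : r < c := by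
  obtain ⟨j, hj, p, hp, hr, hc⟩ := h
  have h1 := hm j (by omega)
  have h2 : wS m (j + 1) = wS m j + m j := wS_succ j
  omega

lemma colUniq {c x x' : ℕ} (h : wP d m x c) (h' : wP d m x' c) : x = x' := by
  obtain ⟨j, hj, p, hp, hx, hc⟩ := h
  obtain ⟨j', hj', p', hp', hx', hc'⟩ := h'
  obtain ⟨h1, h2⟩ := uniq hp hp' (hc.symm.trans hc')
  have hjj : j = j' := by omega
  subst hjj; omega

lemma rowUniq (hmono : ∀ i j, i ≤ j → j < d → m j ≤ m i) {r x x' : ℕ}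
    (h : wP d m r x) (h' : wP d m r x') : x = x' := by
  obtain ⟨j, hj, p, hp, hr, hx⟩ := h
  obtain ⟨j', hj', p', hp', hr', hx'⟩ := h'
  have hpj : p < m j := lt_of_lt_of_le hp (hmono j (j + 1) (by omega) hj)
  have hpj' : p' < m j' := lt_of_lt_of_le hp' (hmono j' (j' + 1) (by omega) hj')
  obtain ⟨h1, h2⟩ := uniq hpj hpj' (hr.symm.trans hr')
  subst h1; omega

end Stmt7Aux

/-- **(2.5).** Any matrix `X` commuting with a single-eigenvalue Weyr matrix `W`
with block sizes `m 0 ≥ ⋯ ≥ m (d-1)` is block upper triangular: the block of `X`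
in block-row `i` and block-column `j` vanishes whenever `i > j`. -/
theorem stmt7 {k : Type*} [Field k] {n : ℕ} (lam : k) (d : ℕ) (m : ℕ → ℕ)
    (W : Matrix (Fin n) (Fin n) k) (hW : IsSingleWeyrData lam d m W)
    (X : Matrix (Fin n) (Fin n) k) (hX : X * W = W * X) :
    ∀ i j : ℕ, i < d → j < d → j < i →
      ∀ r c : Fin n,
        (∑ l ∈ Finset.range i, m l) ≤ (r : ℕ) →
        (r : ℕ) < ∑ l ∈ Finset.range (i + 1), m l →
        (∑ l ∈ Finset.range j, m l) ≤ (c : ℕ) →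
        (c : ℕ) < ∑ l ∈ Finset.range (j + 1), m l →
        X r c = 0 := by
  classical
  obtain ⟨hm, hmono, hsum, hWe⟩ := hW
  open Stmt7Aux in
  have hsn : wS m d = n := hsum
  -- Split W into diagonal part and the nilpotent indicator part.
  have hWe' : ∀ r c : Fin n,
      W r c = (if (r : ℕ) = (c : ℕ) then lam else 0)
        + (if Stmt7Aux.wP d m r c then 1 else 0) := by
    intro r c
    rw [hWe]
    have hiff : (∃ j, j + 1 < d ∧ ∃ p, p < m (j + 1) ∧
        (r : ℕ) = (∑ i ∈ Finset.range j, m i) + p ∧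
        (c : ℕ) = (∑ i ∈ Finset.range (j + 1), m i) + p) ↔ Stmt7Aux.wP d m r c :=
      Iff.rfl
    by_cases h1 : (r : ℕ) = (c : ℕ)
    · have h2 : ¬ Stmt7Aux.wP d m r c := fun h => absurd (Stmt7Aux.wP_lt hm h) (by omega)
      simp only [if_pos h1, hiff, if_neg h2, add_zero]
    · simp only [if_neg h1, hiff, zero_add]
  -- Key commutation relation for the nilpotent part.
  have key : ∀ r c : Fin n,
      (∑ x : Fin n, if Stmt7Aux.wP d m ↑x ↑c then X r x else 0)
        = ∑ x : Fin n, if Stmt7Aux.wP d m ↑r ↑x then X x c else 0 := by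
    intro r c
    have h1 := congrFun (congrFun hX r) c
    rw [Matrix.mul_apply, Matrix.mul_apply] at h1
    have e1 : ∑ x : Fin n, X r x * W x c
        = X r c * lam + ∑ x : Fin n, (if Stmt7Aux.wP d m ↑x ↑c then X r x else 0) := by
      simp only [hWe', mul_add, mul_ite, mul_one, mul_zero]
      rw [Finset.sum_add_distrib]
      congr 1
      simp only [Fin.val_inj]
      rw [Finset.sum_ite_eq' Finset.univ c (fun x => X r x * lam)]
      simp
    have e2 : ∑ x : Fin n, W r x * X x c
        = lam * X r c + ∑ x : Fin n, (if Stmt7Aux.wP d m ↑r ↑x then X x c else 0) := by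
      simp only [hWe', add_mul, ite_mul, one_mul, zero_mul]
      rw [Finset.sum_add_distrib]
      congr 1
      simp only [Fin.val_inj]
      rw [Finset.sum_ite_eq Finset.univ r (fun x => lam * X x c)]
      simp
    rw [e1, e2, mul_comm (X r c) lam] at h1
    exact add_left_cancel h1
  -- Evaluations of the indicator sums.
  have sumCol0 : ∀ (r c : Fin n), (∀ x : Fin n, ¬ Stmt7Aux.wP d m ↑x ↑c) →
      (∑ x : Fin n, if Stmt7Aux.wP d m ↑x ↑c then X r x else 0) = 0 :=
    fun r c h => Finset.sum_eq_zero fun x _ => if_neg (h x)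
  have sumCol1 : ∀ (r c x0 : Fin n), Stmt7Aux.wP d m ↑x0 ↑c →
      (∑ x : Fin n, if Stmt7Aux.wP d m ↑x ↑c then X r x else 0) = X r x0 := by
    intro r c x0 h0
    rw [Finset.sum_eq_single x0]
    · exact if_pos h0
    · intro x _ hx
      exact if_neg fun hw => hx (Fin.val_inj.mp (Stmt7Aux.colUniq hw h0))
    · intro h; exact absurd (Finset.mem_univ x0) h
  have sumRow1 : ∀ (r c x0 : Fin n), Stmt7Aux.wP d m ↑r ↑x0 →
      (∑ x : Fin n, if Stmt7Aux.wP d m ↑r ↑x then X x c else 0) = X x0 c := by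
    intro r c x0 h0
    rw [Finset.sum_eq_single x0]
    · exact if_pos h0
    · intro x _ hx
      exact if_neg fun hw => hx (Fin.val_inj.mp (Stmt7Aux.rowUniq hmono hw h0))
    · intro h; exact absurd (Finset.mem_univ x0) h
  -- indices inside blocks are `< n`
  have finlt : ∀ a p : ℕ, a < d → p < m a → Stmt7Aux.wS m a + p < n := by
    intro a p ha hp
    have h1 : Stmt7Aux.wS m (a + 1) = Stmt7Aux.wS m a + m a := Stmt7Aux.wS_succ a
    have h2 : Stmt7Aux.wS m (a + 1) ≤ Stmt7Aux.wS m d := Stmt7Aux.wS_mono (by omega)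
    omega
  -- Step 1: entries in block column 0, block row i ≥ 1, vanish.
  have step1 : ∀ i, 0 < i → i < d → ∀ q, q < m i → ∀ r c : Fin n,
      (r : ℕ) = Stmt7Aux.wS m i + q → (c : ℕ) < m 0 → X r c = 0 := by
    intro i hi0 hid q hq r c hr hc
    obtain ⟨i', rfl⟩ : ∃ i', i = i' + 1 := ⟨i - 1, by omega⟩
    have hq' : q < m i' := lt_of_lt_of_le hq (hmono i' (i' + 1) (by omega) hid)
    set r0 : Fin n := ⟨Stmt7Aux.wS m i' + q, finlt i' q (by omega) hq'⟩ with hr0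
    have hP : Stmt7Aux.wP d m ↑r0 ↑r := ⟨i', hid, q, hq, rfl, hr⟩
    have h := key r0 c
    rw [sumRow1 r0 c r hP] at h
    rw [sumCol0 r0 c ?hempty] at h
    · exact h.symm
    case hempty =>
      rintro x ⟨j, hj, p, hp, _, hcx⟩
      have h1 : Stmt7Aux.wS m 1 ≤ Stmt7Aux.wS m (j + 1) := Stmt7Aux.wS_mono (by omega)
      have h2 : Stmt7Aux.wS m 1 = m 0 := by
        simp [Stmt7Aux.wS, Finset.sum_range_one]
      omega
  -- Step 2: down-left shift invariance of entries.
  have step2 : ∀ i j q p (r1 c1 r2 c2 : Fin n), i + 1 < d → j + 1 < d →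
      q < m (i + 1) → p < m (j + 1) →
      (r1 : ℕ) = Stmt7Aux.wS m i + q → (c1 : ℕ) = Stmt7Aux.wS m j + p →
      (r2 : ℕ) = Stmt7Aux.wS m (i + 1) + q → (c2 : ℕ) = Stmt7Aux.wS m (j + 1) + p →
      X r2 c2 = X r1 c1 := by
    intro i j q p r1 c1 r2 c2 hi hj hq hp hr1 hc1 hr2 hc2
    have h := key r1 c2
    rw [sumCol1 r1 c2 c1 ⟨j, hj, p, hp, hc1, hc2⟩,
      sumRow1 r1 c2 r2 ⟨i, hi, q, hq, hr1, hr2⟩] at h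
    exact h.symm
  -- Step 3: all strictly-lower blocks vanish, by induction on the column block.
  have step3 : ∀ j i, j < i → i < d → ∀ q p (r c : Fin n), q < m i → p < m j →
      (r : ℕ) = Stmt7Aux.wS m i + q → (c : ℕ) = Stmt7Aux.wS m j + p → X r c = 0 := by
    intro j
    induction j with
    | zero =>
      intro i hji hid q p r c hq hp hr hc
      refine step1 i hji hid q hq r c hr ?_
      have h0 : Stmt7Aux.wS m 0 = 0 := rfl
      omega
    | succ j ih =>
      intro i hji hid q p r c hq hp hr hc
      obtain ⟨i', rfl⟩ : ∃ i', i = i' + 1 := ⟨i - 1, by omega⟩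
      have hq' : q < m i' := lt_of_lt_of_le hq (hmono i' (i' + 1) (by omega) hid)
      have hp' : p < m j := lt_of_lt_of_le hp (hmono j (j + 1) (by omega) (by omega))
      set r' : Fin n := ⟨Stmt7Aux.wS m i' + q, finlt i' q (by omega) hq'⟩ with hr'
      set c' : Fin n := ⟨Stmt7Aux.wS m j + p, finlt j p (by omega) hp'⟩ with hc'
      have hshift := step2 i' j q p r' c' r c hid (by omega) hq hp rfl rfl hr hc
      rw [hshift]
      exact ih i' (by omega) (by omega) q p r' c' hq' hp' rfl rfl
  -- Conclusion.
  intro i j hid hjd hji r c hr1 hr2 hc1 hc2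
  have hsi : Stmt7Aux.wS m (i + 1) = Stmt7Aux.wS m i + m i := Stmt7Aux.wS_succ i
  have hsj : Stmt7Aux.wS m (j + 1) = Stmt7Aux.wS m j + m j := Stmt7Aux.wS_succ j
  have hri : Stmt7Aux.wS m i = ∑ l ∈ Finset.range i, m l := rfl
  have hri1 : Stmt7Aux.wS m (i + 1) = ∑ l ∈ Finset.range (i + 1), m l := rfl
  have hrj : Stmt7Aux.wS m j = ∑ l ∈ Finset.range j, m l := rfl
  have hrj1 : Stmt7Aux.wS m (j + 1) = ∑ l ∈ Finset.range (j + 1), m l := rfl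
  exact step3 j i hji hid ((r : ℕ) - Stmt7Aux.wS m i) ((c : ℕ) - Stmt7Aux.wS m j) r c
    (by omega) (by omega) (by omega) (by omega)
end

section
/- Let $\varphi$ be a block upper triangular idempotent matrix over an algebraically closed field $k$ (partitioned into blocks of sizes $n_1,\dots,n_t$). Then there exists an invertible block upper triangular matrix $\chi$ (with the same partition) such that $\chi^{-1}\varphi\chi$ is block diagonal with each diagonal block of the form $\begin{pmatrix} I_{d_l} & 0 \\ 0 & 0 \end{pmatrix}$ for some $0 \le d_l \le n_l$. -/
open Matrix

set_option maxHeartbeats 1000000 in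
/-- Every idempotent matrix over a field is conjugate to `diag(I_d, 0)`. -/
private lemma key_idem_conj {k : Type*} [Field k] (n : ℕ) (A : Matrix (Fin n) (Fin n) k)
    (h : A * A = A) :
    ∃ d : ℕ, d ≤ n ∧ ∃ C : Matrix (Fin n) (Fin n) k, IsUnit C ∧
      C⁻¹ * A * C = Matrix.of (fun i j : Fin n => if i = j ∧ (i : ℕ) < d then 1 else 0) := by
  classical
  set f := Matrix.toLin' A with hfdef
  have hff : f ∘ₗ f = f := by rw [hfdef, ← Matrix.toLin'_mul, h]
  have hproj : LinearMap.IsProj (LinearMap.range f) f :=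
    ⟨fun x => ⟨x, rfl⟩, by rintro x ⟨y, rfl⟩; exact DFunLike.congr_fun hff y⟩
  have hcompl : IsCompl (LinearMap.range f) (LinearMap.ker f) := hproj.isCompl
  set d := Module.finrank k (LinearMap.range f) with hd
  set e := Module.finrank k (LinearMap.ker f) with he
  have hde : d + e = n := by
    rw [hd, he, Submodule.finrank_add_eq_of_isCompl hcompl, Module.finrank_fin_fun]
  have hdn : d ≤ n := hde ▸ Nat.le_add_right d e
  let b₁ : Module.Basis (Fin d) k (LinearMap.range f) := Module.finBasis k (LinearMap.range f)
  let b₂ : Module.Basis (Fin e) k (LinearMap.ker f) := Module.finBasis k (LinearMap.ker f)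
  let ε : (Fin d ⊕ Fin e) ≃ Fin n := finSumFinEquiv.trans (finCongr hde)
  let b0 : Module.Basis (Fin d ⊕ Fin e) k (Fin n → k) :=
    (b₁.prod b₂).map (Submodule.prodEquivOfIsCompl _ _ hcompl)
  let b : Module.Basis (Fin n) k (Fin n → k) := b0.reindex ε
  have hb0l : ∀ c : Fin d, b0 (Sum.inl c) = (b₁ c : Fin n → k) := by
    intro c
    show Submodule.prodEquivOfIsCompl _ _ hcompl ((b₁.prod b₂) (Sum.inl c)) = _
    have h1 : (b₁.prod b₂) (Sum.inl c) = (b₁ c, 0) := by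
      ext1
      · exact Module.Basis.prod_apply_inl_fst b₁ b₂ c
      · exact Module.Basis.prod_apply_inl_snd b₁ b₂ c
    rw [h1, Submodule.coe_prodEquivOfIsCompl']
    simp
  have hb0r : ∀ c : Fin e, b0 (Sum.inr c) = (b₂ c : Fin n → k) := by
    intro c
    show Submodule.prodEquivOfIsCompl _ _ hcompl ((b₁.prod b₂) (Sum.inr c)) = _
    have h1 : (b₁.prod b₂) (Sum.inr c) = (0, b₂ c) := by
      ext1
      · exact Module.Basis.prod_apply_inr_fst b₁ b₂ c
      · exact Module.Basis.prod_apply_inr_snd b₁ b₂ c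
    rw [h1, Submodule.coe_prodEquivOfIsCompl']
    simp
  have hbl : ∀ c : Fin d, f (b0 (Sum.inl c)) = b0 (Sum.inl c) := by
    intro c
    rw [hb0l]
    exact hproj.map_id _ (b₁ c).2
  have hbr : ∀ c : Fin e, f (b0 (Sum.inr c)) = 0 := by
    intro c
    rw [hb0r]
    exact LinearMap.mem_ker.mp (b₂ c).2
  have hM : LinearMap.toMatrix b b f =
      Matrix.of (fun i j : Fin n => if i = j ∧ (i : ℕ) < d then 1 else 0) := by
    ext i j
    rw [LinearMap.toMatrix_apply]
    have hbj : b j = b0 (ε.symm j) := Module.Basis.reindex_apply b0 ε j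
    rcases hs : ε.symm j with c | c
    · have hj : j = ε (Sum.inl c) := by rw [← hs, Equiv.apply_symm_apply]
      have hjd : (j : ℕ) < d := by
        have : (j : ℕ) = (c : ℕ) := by
          rw [hj]
          simp [ε, finSumFinEquiv_apply_left]
        rw [this]; exact c.2
      rw [hbj, hs, hbl c, ← hs, ← hbj, Module.Basis.repr_self, Finsupp.single_apply]
      by_cases hij : i = j
      · subst hij
        simp [hjd]
      · simp [Ne.symm hij, hij]
    · have hj : j = ε (Sum.inr c) := by rw [← hs, Equiv.apply_symm_apply]
      have hjd : ¬ (j : ℕ) < d := by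
        have : (j : ℕ) = d + (c : ℕ) := by
          rw [hj]
          simp [ε, finSumFinEquiv_apply_right]
        omega
      rw [hbj, hs, hbr c]
      simp only [map_zero, Finsupp.coe_zero, Pi.zero_apply, Matrix.of_apply]
      rcases eq_or_ne i j with rfl | hij
      · simp [hjd]
      · simp [hij]
  let std : Module.Basis (Fin n) k (Fin n → k) := Pi.basisFun k (Fin n)
  have hA : LinearMap.toMatrix std std f = A := by
    show LinearMap.toMatrix (Pi.basisFun k (Fin n)) (Pi.basisFun k (Fin n)) f = A
    rw [LinearMap.toMatrix_eq_toMatrix', hfdef, LinearMap.toMatrix'_toLin']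
  let C : Matrix (Fin n) (Fin n) k := std.toMatrix b
  have h1 : C * b.toMatrix std = 1 := Module.Basis.toMatrix_mul_toMatrix_flip std b
  have h2 : b.toMatrix std * C = 1 := Module.Basis.toMatrix_mul_toMatrix_flip b std
  have hCu : IsUnit C := ⟨⟨C, b.toMatrix std, h1, h2⟩, rfl⟩
  have hCinv : C⁻¹ = b.toMatrix std := Matrix.inv_eq_right_inv h1
  refine ⟨d, hdn, C, hCu, ?_⟩
  rw [hCinv, ← hM, ← hA]
  exact basis_toMatrix_mul_linearMap_toMatrix_mul_basis_toMatrix b std b std f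

set_option maxHeartbeats 1000000 in
/-- **Lemma 3.5.1.** Every block upper triangular idempotent matrix `φ` over an
algebraically closed field (with respect to a partition into `t` blocks of sizes
`nn i`) is conjugate, by an invertible block upper triangular matrix `χ` with
the same partition, to a block diagonal idempotent whose `l`-th diagonal block
is `diag(I_{d l}, 0)` for some `0 ≤ d l ≤ nn l`. -/
theorem stmt14 {k : Type*} [Field k] [IsAlgClosed k] (t : ℕ) (nn : Fin t → ℕ)
    (φ : Matrix ((i : Fin t) × Fin (nn i)) ((i : Fin t) × Fin (nn i)) k)
    (hidem : φ * φ = φ)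
    (hupper : ∀ x y : (i : Fin t) × Fin (nn i), y.1 < x.1 → φ x y = 0) :
    ∃ χ : Matrix ((i : Fin t) × Fin (nn i)) ((i : Fin t) × Fin (nn i)) k,
      IsUnit χ ∧ (∀ x y : (i : Fin t) × Fin (nn i), y.1 < x.1 → χ x y = 0) ∧
      ∃ d : Fin t → ℕ, (∀ l, d l ≤ nn l) ∧
        χ⁻¹ * φ * χ = Matrix.of (fun x y : (i : Fin t) × Fin (nn i) =>
          if x = y ∧ (x.2 : ℕ) < d x.1 then 1 else 0) := by
  classical
  -- the diagonal blocks of φ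
  set A : ∀ l : Fin t, Matrix (Fin (nn l)) (Fin (nn l)) k :=
    fun l => Matrix.of (fun i j => φ ⟨l, i⟩ ⟨l, j⟩) with hAdef
  have hφtri : φ.BlockTriangular Sigma.fst := fun x y h => hupper x y h
  -- diagonal blocks are idempotent
  have hA : ∀ l, A l * A l = A l := by
    intro l
    ext i j
    have h1 : (φ * φ) ⟨l, i⟩ ⟨l, j⟩ = φ ⟨l, i⟩ ⟨l, j⟩ := by rw [hidem]
    rw [Matrix.mul_apply, ← Finset.univ_sigma_univ, Finset.sum_sigma] at h1
    have h2 : ∀ m : Fin t, m ∈ Finset.univ → m ≠ l →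
        ∑ p : Fin (nn m), φ ⟨l, i⟩ ⟨m, p⟩ * φ ⟨m, p⟩ ⟨l, j⟩ = 0 := by
      intro m _ hm
      refine Finset.sum_eq_zero fun p _ => ?_
      rcases lt_or_gt_of_ne hm with hlt | hgt
      · rw [hupper ⟨l, i⟩ ⟨m, p⟩ hlt, zero_mul]
      · rw [hupper ⟨m, p⟩ ⟨l, j⟩ hgt, mul_zero]
    rw [Finset.sum_eq_single_of_mem l (Finset.mem_univ l) h2] at h1
    rw [Matrix.mul_apply]
    exact h1
  -- conjugate each diagonal block to standard form
  have hkey := fun l => key_idem_conj (nn l) (A l) (hA l)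
  choose d hd C hCu hC using hkey
  have hCdet : ∀ l, IsUnit (C l).det := fun l => (Matrix.isUnit_iff_isUnit_det _).mp (hCu l)
  have hCD : ∀ l, C l * (C l)⁻¹ = 1 := fun l => Matrix.mul_nonsing_inv _ (hCdet l)
  have hDC : ∀ l, (C l)⁻¹ * C l = 1 := fun l => Matrix.nonsing_inv_mul _ (hCdet l)
  set Cb : Matrix ((i : Fin t) × Fin (nn i)) ((i : Fin t) × Fin (nn i)) k :=
    Matrix.blockDiagonal' C with hCbdef
  set Db : Matrix ((i : Fin t) × Fin (nn i)) ((i : Fin t) × Fin (nn i)) k :=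
    Matrix.blockDiagonal' (fun l => (C l)⁻¹) with hDbdef
  have hCbDb : Cb * Db = 1 := by
    rw [hCbdef, hDbdef, ← Matrix.blockDiagonal'_mul]
    have : (fun l => C l * (C l)⁻¹) = fun l : Fin t =>
        (1 : Matrix (Fin (nn l)) (Fin (nn l)) k) := funext fun l => hCD l
    rw [this]
    exact Matrix.blockDiagonal'_one
  have hDbCb : Db * Cb = 1 := by
    rw [hCbdef, hDbdef, ← Matrix.blockDiagonal'_mul]
    have : (fun l => (C l)⁻¹ * C l) = fun l : Fin t =>
        (1 : Matrix (Fin (nn l)) (Fin (nn l)) k) := funext fun l => hDC l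
    rw [this]
    exact Matrix.blockDiagonal'_one
  have hCbu : IsUnit Cb := ⟨⟨Cb, Db, hCbDb, hDbCb⟩, rfl⟩
  have hCbinv : Cb⁻¹ = Db := Matrix.inv_eq_right_inv hCbDb
  -- the target idempotent e
  set εf : ((i : Fin t) × Fin (nn i)) → k :=
    fun x => if (x.2 : ℕ) < d x.1 then 1 else 0 with hεdef
  set e : Matrix ((i : Fin t) × Fin (nn i)) ((i : Fin t) × Fin (nn i)) k :=
    Matrix.diagonal εf with hedef
  have hee : e * e = e := by
    have hmul : (fun x => εf x * εf x) = εf := by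
      funext x
      by_cases hx : (x.2 : ℕ) < d x.1 <;> simp [hεdef, hx]
    rw [hedef, Matrix.diagonal_mul_diagonal, hmul]
  have hetarget : e = Matrix.of (fun x y : (i : Fin t) × Fin (nn i) =>
      if x = y ∧ (x.2 : ℕ) < d x.1 then 1 else 0) := by
    ext x y
    rw [hedef, Matrix.diagonal_apply, Matrix.of_apply, hεdef]
    by_cases hxy : x = y
    · subst hxy; by_cases hx : (x.2 : ℕ) < d x.1 <;> simp [hx]
    · simp [hxy]
  -- the conjugated matrix ψ
  set ψ : Matrix ((i : Fin t) × Fin (nn i)) ((i : Fin t) × Fin (nn i)) k :=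
    Cb⁻¹ * φ * Cb with hψdef
  have hCbCbinv : Cb * Cb⁻¹ = 1 := by rw [hCbinv]; exact hCbDb
  have hψidem : ψ * ψ = ψ := by
    have step : ψ * ψ = Cb⁻¹ * (φ * ((Cb * Cb⁻¹) * (φ * Cb))) := by
      rw [hψdef]; simp only [Matrix.mul_assoc]
    rw [step, hCbCbinv, one_mul, ← Matrix.mul_assoc φ φ Cb, hidem, hψdef, Matrix.mul_assoc]
  have hCbtri : Cb.BlockTriangular Sigma.fst := Matrix.blockTriangular_blockDiagonal' C
  have hDbtri : Db.BlockTriangular Sigma.fst :=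
    Matrix.blockTriangular_blockDiagonal' (fun l => (C l)⁻¹)
  have hψtri : ψ.BlockTriangular Sigma.fst := by
    rw [hψdef, hCbinv]
    exact (hDbtri.mul hφtri).mul hCbtri
  -- diagonal blocks of ψ
  have hψblocks : ∀ (l : Fin t) (i j : Fin (nn l)),
      ψ ⟨l, i⟩ ⟨l, j⟩ = if i = j ∧ (i : ℕ) < d l then 1 else 0 := by
    intro l i j
    have step1 : ∀ p : Fin (nn l), (φ * Cb) ⟨l, p⟩ ⟨l, j⟩ = (A l * C l) p j := by
      intro p
      rw [Matrix.mul_apply, ← Finset.univ_sigma_univ, Finset.sum_sigma]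
      rw [Finset.sum_eq_single_of_mem l (Finset.mem_univ l) (fun m _ hm =>
        Finset.sum_eq_zero fun q _ => by
          rw [hCbdef, Matrix.blockDiagonal'_apply_ne _ _ _ hm, mul_zero])]
      rw [Matrix.mul_apply]
      refine Finset.sum_congr rfl fun q _ => ?_
      rw [hCbdef, Matrix.blockDiagonal'_apply_eq]
      rfl
    have step2 : ψ ⟨l, i⟩ ⟨l, j⟩ = ((C l)⁻¹ * (A l * C l)) i j := by
      rw [hψdef, hCbinv, Matrix.mul_assoc, Matrix.mul_apply, ← Finset.univ_sigma_univ,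
        Finset.sum_sigma]
      rw [Finset.sum_eq_single_of_mem l (Finset.mem_univ l) (fun m _ hm =>
        Finset.sum_eq_zero fun q _ => by
          rw [hDbdef, Matrix.blockDiagonal'_apply_ne _ _ _ (Ne.symm hm), zero_mul])]
      rw [Matrix.mul_apply]
      refine Finset.sum_congr rfl fun q _ => ?_
      rw [hDbdef, Matrix.blockDiagonal'_apply_eq, step1 q]
    rw [step2, ← Matrix.mul_assoc, hC l]
    rfl
  -- the unipotent correction u
  set u : Matrix ((i : Fin t) × Fin (nn i)) ((i : Fin t) × Fin (nn i)) k :=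
    e * ψ + (1 - e) * (1 - ψ) with hudef
  have huψ : u * ψ = e * u := by
    have h1 : (1 - ψ) * ψ = 0 := by rw [sub_mul, one_mul, hψidem, sub_self]
    have h2 : e * (1 - e) = 0 := by rw [mul_sub, mul_one, hee, sub_self]
    have left : u * ψ = e * ψ := by
      rw [hudef, add_mul, mul_assoc e ψ ψ, hψidem, mul_assoc (1-e) (1-ψ) ψ, h1, mul_zero, add_zero]
    have right : e * u = e * ψ := by
      rw [hudef, mul_add, ← mul_assoc e e ψ, hee, ← mul_assoc e (1-e) (1-ψ), h2, zero_mul, add_zero]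
    rw [left, right]
  have hetri : e.BlockTriangular Sigma.fst := Matrix.blockTriangular_diagonal εf
  have h1tri : (1 : Matrix ((i : Fin t) × Fin (nn i)) ((i : Fin t) × Fin (nn i)) k).BlockTriangular
      Sigma.fst := Matrix.blockTriangular_one
  have hutri : u.BlockTriangular Sigma.fst := by
    rw [hudef]
    exact (hetri.mul hψtri).add ((h1tri.sub hetri).mul (h1tri.sub hψtri))
  -- the diagonal blocks of u are identity matrices
  have hublocks : ∀ x y : (i : Fin t) × Fin (nn i), x.1 = y.1 →
      u x y = if x = y then 1 else 0 := by
    rintro ⟨l, i⟩ ⟨m, j⟩ (h : l = m)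
    subst h
    have hone : (1 : Matrix ((i : Fin t) × Fin (nn i)) ((i : Fin t) × Fin (nn i)) k)
        ⟨l, i⟩ ⟨l, j⟩ = if i = j then 1 else 0 := by
      rw [Matrix.one_apply]
      simp [Sigma.mk.inj_iff]
    have hsub : (1 : Matrix ((i : Fin t) × Fin (nn i)) ((i : Fin t) × Fin (nn i)) k) - e =
        Matrix.diagonal (fun x => 1 - εf x) := by
      rw [hedef, ← Matrix.diagonal_one, Matrix.diagonal_sub]
    have : u ⟨l, i⟩ ⟨l, j⟩ = εf ⟨l, i⟩ * ψ ⟨l, i⟩ ⟨l, j⟩ +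
        (1 - εf ⟨l, i⟩) * ((if i = j then 1 else 0) - ψ ⟨l, i⟩ ⟨l, j⟩) := by
      rw [hudef, Matrix.add_apply, hedef, Matrix.diagonal_mul, hsub, Matrix.diagonal_mul,
        Matrix.sub_apply, hone]
    rw [this, hψblocks l i j]
    have hε : εf ⟨l, i⟩ = if (i : ℕ) < d l then 1 else 0 := rfl
    rw [hε]
    by_cases hij : i = j
    · subst hij
      by_cases hlt : (i : ℕ) < d l <;> simp [hlt]
    · have hxy : (⟨l, i⟩ : (i : Fin t) × Fin (nn i)) ≠ ⟨l, j⟩ := by simp [hij]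
      simp [hij, hxy]
  -- u has determinant one
  have hudet : u.det = 1 := by
    rw [hutri.det]
    refine Finset.prod_eq_one fun l _ => ?_
    have : u.toSquareBlock Sigma.fst l = 1 := by
      ext ⟨x, hx⟩ ⟨y, hy⟩
      simp only [Matrix.toSquareBlock_def, Matrix.of_apply, Matrix.one_apply]
      rw [hublocks x y (hx.trans hy.symm)]
      by_cases hxy : x = y
      · subst hxy; simp
      · have hne : (⟨x, hx⟩ : {a : (i : Fin t) × Fin (nn i) // a.1 = l}) ≠ ⟨y, hy⟩ :=
          fun h => hxy (congrArg Subtype.val h)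
        simp [hxy, hne]
    rw [this, Matrix.det_one]
  have huu : IsUnit u.det := by rw [hudet]; exact isUnit_one
  have huinv : u * u⁻¹ = 1 := Matrix.mul_nonsing_inv _ huu
  haveI : Invertible u := u.invertibleOfIsUnitDet huu
  have huinvtri : (u⁻¹).BlockTriangular Sigma.fst :=
    Matrix.blockTriangular_inv_of_blockTriangular hutri
  -- assemble χ
  refine ⟨Cb * u⁻¹, ?_, ?_, d, hd, ?_⟩
  · have : IsUnit u⁻¹ := ⟨⟨u⁻¹, u, Matrix.nonsing_inv_mul _ huu, huinv⟩, rfl⟩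
    exact hCbu.mul this
  · exact fun x y h => (hCbtri.mul huinvtri) h
  · have hχinv : (Cb * u⁻¹)⁻¹ = u * Cb⁻¹ := by
      rw [Matrix.mul_inv_rev, Matrix.nonsing_inv_nonsing_inv _ huu]
    rw [hχinv, ← hetarget]
    calc u * Cb⁻¹ * φ * (Cb * u⁻¹) = u * (Cb⁻¹ * φ * Cb) * u⁻¹ := by
          simp only [Matrix.mul_assoc]
      _ = u * ψ * u⁻¹ := by rw [hψdef]
      _ = e * u * u⁻¹ := by rw [huψ]
      _ = e := by rw [Matrix.mul_assoc, huinv, Matrix.mul_one]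
end

section
/- Let $(\mathcal{K},\mathcal{M},H)$ be as above and suppose idempotents split in $\mathcal{K}$. If $\varphi: M \to M$ is an idempotent endomorphism in the category $\mathrm{Mat}(\mathcal{K},\mathcal{M})$ (i.e. $\varphi \in \mathcal{K}$, $M\varphi - \varphi M = d(\varphi)$, $\varphi^2 = \varphi$), and $\varphi = \pi\iota$ with $\iota\pi = \mathrm{id}$ for matrices $\pi, \iota$ over $\mathcal{K}$, then setting $L = \iota M \pi - \iota\, d(\pi)$, both $\pi: M \to L$ and $\iota: L \to M$ are morphisms in $\mathrm{Mat}(\mathcal{K},\mathcal{M})$; hence the idempotent $\varphi$ splits and $\mathrm{Mat}(\mathcal{K},\mathcal{M})$ is Krull-Schmidt. -/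
/-- **(Proposition 3.5.1, splitting of idempotents).** Let `φ : M → M` be an
idempotent endomorphism in `Mat(𝒦, ℳ)` (so `M φ - φ M = d(φ) = φ H - H φ`),
and suppose `φ = π ι` with `ι π = 1` (with `π`, `ι` possibly rectangular, and
`d(X) = X H' - H X` on rectangular matrices). Setting
`L = ι M π - ι d(π)`, both `π : M → L` and `ι : L → M` are morphisms in
`Mat(𝒦, ℳ)`, i.e. `(M + H) π = π (L + H')` and `(L + H') ι = ι (M + H)`; hence
the idempotent `φ` splits. -/
theorem stmt19 {k : Type*} [Field k] (a b : ℕ)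
    (Ha : Matrix (Fin a) (Fin a) k) (Hb : Matrix (Fin b) (Fin b) k)
    (M φ : Matrix (Fin a) (Fin a) k)
    (π : Matrix (Fin a) (Fin b) k) (ι : Matrix (Fin b) (Fin a) k)
    (hφ : φ = π * ι) (hιπ : ι * π = 1)
    (hidem : φ * φ = φ)
    (hmor : M * φ - φ * M = φ * Ha - Ha * φ) :
    (M + Ha) * π = π * ((ι * M * π - ι * (π * Hb - Ha * π)) + Hb) ∧
    ((ι * M * π - ι * (π * Hb - Ha * π)) + Hb) * ι = ι * (M + Ha) := by
  subst hφ
  have hA : ι * (π * Hb) = Hb := by rw [← Matrix.mul_assoc, hιπ, Matrix.one_mul]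
  constructor
  · -- `(1 - φ)(M + Ha)π = 0`, obtained from `hmor` multiplied by `π` on the right
    have h := congrArg (· * π) hmor
    simp only [Matrix.sub_mul, Matrix.mul_assoc, hιπ, Matrix.mul_one] at h
    -- h : M * π - π * (ι * (M * π)) = π * (ι * (Ha * π)) - Ha * π
    have key : M * π + Ha * π = π * (ι * (Ha * π)) + π * (ι * (M * π)) :=
      sub_eq_sub_iff_add_eq_add.mp h
    simp only [Matrix.add_mul, Matrix.mul_add, Matrix.mul_sub, Matrix.mul_assoc, hιπ, hA,
      Matrix.mul_one]
    calc M * π + Ha * π = π * (ι * (Ha * π)) + π * (ι * (M * π)) := key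
      _ = π * (ι * (M * π)) - (π * Hb - π * (ι * (Ha * π))) + π * Hb := by abel
  · -- `ι (M + Ha)(1 - φ) = 0`, obtained from `hmor` multiplied by `ι` on the left
    have h := congrArg (ι * ·) hmor
    simp only [Matrix.mul_sub, ← Matrix.mul_assoc, hιπ, Matrix.one_mul] at h
    -- h : ι * M * π * ι - ι * M = ι * Ha - ι * Ha * π * ι
    have key : ι * M * π * ι + ι * Ha * π * ι = ι * Ha + ι * M :=
      sub_eq_sub_iff_add_eq_add.mp h
    simp only [Matrix.add_mul, Matrix.sub_mul, Matrix.mul_add, Matrix.mul_sub,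
      ← Matrix.mul_assoc, hιπ, Matrix.one_mul]
    calc ι * M * π * ι - (Hb * ι - ι * Ha * π * ι) + Hb * ι
        = ι * M * π * ι + ι * Ha * π * ι := by abel
      _ = ι * Ha + ι * M := key
      _ = ι * M + ι * Ha := by abel
end
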